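/- Let H be the infinite matrix with entries H_{m,m+h;l+h,l} = (2/θ)(1+Ω²)(2m+h+1)δ_{m,l} − (2/θ)(1−Ω²)[√((m+h+1)(m+1))·δ_{m+1,l} + √((m+h)m)·δ_{m−1,l}] (the B = 0 case), θ > 0, 0 < Ω < 1. Fix h ∈ ℕ, set C = (1−Ω)²/(4Ω), and define for α ∈ [0,1), u ≤ min(m,l): P(α)_{m,l} = Σ_{u} A(m,l,h,u)·(C(1+Ω)/(1−Ω))^{m+l−2u}·(1−α)^{(h+2u+1)/2}·α^{m+l−2u}/(1+Cα)^{m+l+h+1}, with A(m,l,h,u) = √(m!(m+h)!l!(l+h)!)/((m−u)!(l−u)!(h+u)!u!). Then P satisfies the ODE (1−α)·dP/dα + (θ/(8Ω))·H·P = 0 entrywise, i.e., for all m, l: −(1−α)(d/dα)P(α)_{m,l} = ((1+Ω²)/(4Ω))(2m+h+1)·P(α)_{m,l} − ((1−Ω²)/(4Ω))[√((m+h+1)(m+1))·P(α)_{m+1,l} + √((m+h)m)·P(α)_{m−1,l}]. -/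

import Mathlib

open Finset Real

/-- The combinatorial factor `A(m,l,h,u)`. -/
noncomputable def calA (m l h u : ℕ) : ℝ :=
  Real.sqrt ((Nat.factorial m) * (Nat.factorial (m+h)) * (Nat.factorial l)
    * (Nat.factorial (l+h)))
  / ((Nat.factorial (m-u)) * (Nat.factorial (l-u)) * (Nat.factorial (h+u))
    * (Nat.factorial u))

/-- Matrix elements `P(α)_{m,l} = [(1-α)^{(θ/8Ω)H}]_{m,m+h;l+h,l}` (B = 0 case). -/
noncomputable def Pmat (Ω : ℝ) (h : ℕ) (α : ℝ) (m l : ℕ) : ℝ :=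
  let C : ℝ := (1-Ω)^2/(4*Ω)
  ∑ u ∈ Finset.range (min m l + 1),
    calA m l h u * (C*(1+Ω)/(1-Ω)) ^ (m+l-2*u)
      * (1-α) ^ ((((h:ℝ)+2*(u:ℝ)+1)/2 : ℝ))
      * α ^ (m+l-2*u) / (1+C*α) ^ (m+l+h+1)

namespace PmatODE

/-- `C` -/
noncomputable def CC (Ω : ℝ) : ℝ := (1-Ω)^2/(4*Ω)
/-- `D = C(1+Ω)/(1-Ω)` -/
noncomputable def DD (Ω : ℝ) : ℝ := CC Ω*(1+Ω)/(1-Ω)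
/-- sqrt prefactor -/
noncomputable def SS (m l h : ℕ) : ℝ :=
  Real.sqrt ((Nat.factorial m) * (Nat.factorial (m+h)) * (Nat.factorial l)
    * (Nat.factorial (l+h)))
/-- rpow exponent -/
noncomputable def rr (h u : ℕ) : ℝ := (((h:ℝ)+2*(u:ℝ)+1)/2 : ℝ)


lemma sqrt_key (A B : ℝ) (hA : 0 ≤ A) : Real.sqrt A * Real.sqrt (A*B) = A * Real.sqrt B := by
  rw [Real.sqrt_mul hA, ← mul_assoc, Real.mul_self_sqrt hA]

lemma sqrtP (m l h : ℕ) :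
    Real.sqrt (((m:ℝ)+(h:ℝ)+1)*((m:ℝ)+1)) * SS (m+1) l h
      = ((m:ℝ)+1) * ((m:ℝ)+(h:ℝ)+1) * SS m l h := by
  unfold SS
  rw [show m+1+h = (m+h)+1 from by omega, Nat.factorial_succ, Nat.factorial_succ]
  push_cast
  rw [show ((m:ℝ)+1) * (Nat.factorial m : ℝ) * ((((m:ℝ)+(h:ℝ))+1) * (Nat.factorial (m+h) : ℝ))
        * (Nat.factorial l : ℝ) * (Nat.factorial (l+h) : ℝ)
      = (((m:ℝ)+(h:ℝ)+1)*((m:ℝ)+1)) * ((Nat.factorial m : ℝ) * (Nat.factorial (m+h) : ℝ)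
        * (Nat.factorial l : ℝ) * (Nat.factorial (l+h) : ℝ)) from by ring]
  rw [sqrt_key (((m:ℝ)+(h:ℝ)+1)*((m:ℝ)+1)) _ (by positivity)]
  ring

lemma sqrtM (m l h : ℕ) (hm : 1 ≤ m) :
    Real.sqrt (((m:ℝ)+(h:ℝ))*(m:ℝ)) * SS (m-1) l h = SS m l h := by
  have e1 : (Nat.factorial m : ℝ) = (m:ℝ) * (Nat.factorial (m-1)) := by
    conv_lhs => rw [show m = (m-1)+1 from by omega]
    rw [Nat.factorial_succ]
    push_cast [Nat.cast_sub hm]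
    ring
  have e2 : (Nat.factorial (m+h) : ℝ) = ((m:ℝ)+(h:ℝ)) * (Nat.factorial (m-1+h)) := by
    rw [show m+h = (m-1+h)+1 from by omega, Nat.factorial_succ]
    push_cast [Nat.cast_sub hm]
    ring
  unfold SS
  rw [← Real.sqrt_mul (by positivity)]
  congr 1
  push_cast [e1, e2]
  ring

/-- common per-`u` base factor -/
noncomputable def bb (Ω α : ℝ) (h m l u : ℕ) : ℝ :=
  SS m l h * (1-α) ^ (rr h u)
    / ((Nat.factorial (m+1-u) : ℝ) * (Nat.factorial (l-u)) * (Nat.factorial (h+u))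
        * (Nat.factorial u) * (1+CC Ω*α) ^ (m+l+h+2))

noncomputable def Lterm (Ω α : ℝ) (h m l u : ℕ) : ℝ :=
  bb Ω α h m l u * ((m:ℝ)+1-(u:ℝ)) *
    ( rr h u * (DD Ω^(m+l+1-2*u+1) * α^(m+l+1-2*u+1) * (1+CC Ω*α))
      - ((m:ℝ)+(l:ℝ)-2*(u:ℝ)) * (DD Ω^(m+l+1-2*u+1) * α^(m+l+1-2*u) * (1-α) * (1+CC Ω*α))
      + ((m:ℝ)+(l:ℝ)+(h:ℝ)+1) * CC Ω * (1-α) * (DD Ω^(m+l+1-2*u+1) * α^(m+l+1-2*u+1)) )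

noncomputable def R1term (Ω α : ℝ) (h m l u : ℕ) : ℝ :=
  bb Ω α h m l u * ((m:ℝ)+1-(u:ℝ)) * (CC Ω+1/2) * (2*(m:ℝ)+(h:ℝ)+1)
    * (DD Ω^(m+l+1-2*u+1) * α^(m+l+1-2*u+1) * (1+CC Ω*α))

noncomputable def R2term (Ω α : ℝ) (h m l u : ℕ) : ℝ :=
  bb Ω α h m l u * (((m:ℝ)+1) * ((m:ℝ)+(h:ℝ)+1))
    * (DD Ω^(m+l+1-2*u+3) * α^(m+l+1-2*u+2))

noncomputable def R3term (Ω α : ℝ) (h m l u : ℕ) : ℝ :=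
  bb Ω α h m l u * (((m:ℝ)-(u:ℝ)) * ((m:ℝ)+1-(u:ℝ)))
    * (DD Ω^(m+l+1-2*u+1) * α^(m+l+1-2*u) * (1+CC Ω*α)^2)

noncomputable def gg (Ω α : ℝ) (h m l u : ℕ) : ℝ :=
  bb Ω α h m l u * (((h:ℝ)+(u:ℝ))*(u:ℝ)) * (DD Ω^(m+l+1-2*u+3) * α^(m+l+1-2*u+2))

noncomputable def gg' (Ω α : ℝ) (h m l u : ℕ) : ℝ :=
  bb Ω α h m l u * (((m:ℝ)+1-(u:ℝ))*((l:ℝ)-(u:ℝ))) * (1-α)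
    * (DD Ω^(m+l+1-2*u+1) * α^(m+l+1-2*u))

/-- the derivative of the `u`-summand of `Pmat` -/
noncomputable def dval (Ω α : ℝ) (h m l u : ℕ) : ℝ :=
  calA m l h u * (DD Ω) ^ (m+l-2*u) *
    ( -(rr h u) * (1-α) ^ (rr h u - 1) * α ^ (m+l-2*u) / (1+CC Ω*α) ^ (m+l+h+1)
      + (1-α) ^ (rr h u) * ((m+l-2*u : ℕ) : ℝ) * α ^ (m+l-2*u-1) / (1+CC Ω*α) ^ (m+l+h+1)
      - (1-α) ^ (rr h u) * α ^ (m+l-2*u) * ((m+l+h+1 : ℕ) : ℝ) * CC Ω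
          / (1+CC Ω*α) ^ (m+l+h+2) )

lemma Pmat_eq (Ω : ℝ) (h : ℕ) (α : ℝ) (m l : ℕ) :
    Pmat Ω h α m l = ∑ u ∈ Finset.range (min m l + 1),
      calA m l h u * (DD Ω) ^ (m+l-2*u) * (1-α) ^ (rr h u) * α ^ (m+l-2*u)
        / (1+CC Ω*α) ^ (m+l+h+1) := rfl

lemma npow_helper (n : ℕ) (x : ℝ) : (n:ℝ) * x^(n-1) * x^2 = (n:ℝ) * x^(n+1) := by
  cases n with
  | zero => simp
  | succ k => push_cast; ring

section

variable {Ω α : ℝ} {h m l : ℕ} (hΩ0 : 0 < Ω) (hΩ1 : Ω < 1) (hα0 : 0 < α) (hα1 : α < 1)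

include hΩ0 hΩ1 in
lemma hC0 : 0 < CC Ω := by
  unfold CC
  have h1 : (0:ℝ) < 1 - Ω := by linarith
  positivity

include hΩ0 hΩ1 in
lemma hD0 : 0 < DD Ω := by
  unfold DD
  have := hC0 hΩ0 hΩ1
  have h1 : (0:ℝ) < 1 - Ω := by linarith
  have h2 : (0:ℝ) < 1 + Ω := by linarith
  positivity

include hΩ0 hΩ1 hα0 in
lemma hQ0 : 0 < 1 + CC Ω * α := by
  have := hC0 hΩ0 hΩ1
  positivity

include hΩ0 hΩ1 in
lemma hD2 : (DD Ω)^2 = (CC Ω)^2 + CC Ω := by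
  unfold DD CC
  have h1 : (1:ℝ) - Ω ≠ 0 := by linarith
  have h2 : (Ω:ℝ) ≠ 0 := ne_of_gt hΩ0
  field_simp
  ring

include hΩ0 in
lemma hc1 : (1+Ω^2)/(4*Ω) = CC Ω + 1/2 := by
  unfold CC
  have h2 : (Ω:ℝ) ≠ 0 := ne_of_gt hΩ0
  field_simp
  ring

include hΩ0 hΩ1 in
lemma hc2 : (1-Ω^2)/(4*Ω) = DD Ω := by
  unfold DD CC
  have h1 : (1:ℝ) - Ω ≠ 0 := by linarith
  have h2 : (Ω:ℝ) ≠ 0 := ne_of_gt hΩ0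
  field_simp
  ring

include hα1 in
lemma hasDerivAt_term (u : ℕ) (hQ : (1:ℝ) + CC Ω * α ≠ 0) :
    HasDerivAt (fun β => calA m l h u * (DD Ω) ^ (m+l-2*u) * (1-β) ^ (rr h u)
      * β ^ (m+l-2*u) / (1+CC Ω*β) ^ (m+l+h+1)) (dval Ω α h m l u) α := by
  have h1 : HasDerivAt (fun β : ℝ => 1 - β) (-1) α := by
    simpa using (hasDerivAt_id α).const_sub 1
  have h2 : HasDerivAt (fun β : ℝ => (1-β) ^ (rr h u)) (-1 * rr h u * (1-α)^(rr h u-1)) α :=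
    h1.rpow_const (Or.inl (by linarith))
  have h3 := hasDerivAt_pow (m+l-2*u) α
  have h4 : HasDerivAt (fun β : ℝ => 1 + CC Ω * β) (CC Ω*1) α :=
    ((hasDerivAt_id α).const_mul (CC Ω)).const_add 1
  have h5 := h4.pow (m+l+h+1)
  have h6 := ((h2.const_mul (calA m l h u * (DD Ω) ^ (m+l-2*u))).mul h3).div h5
    (pow_ne_zero _ hQ)
  have heq : ( (calA m l h u * (DD Ω) ^ (m+l-2*u) * (-1 * rr h u * (1-α)^(rr h u-1)) * α^(m+l-2*u)
        + calA m l h u * (DD Ω) ^ (m+l-2*u) * (1-α)^(rr h u) * (↑(m+l-2*u) * α^(m+l-2*u-1)))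
          * (1+CC Ω*α)^(m+l+h+1)
      - calA m l h u * (DD Ω) ^ (m+l-2*u) * (1-α)^(rr h u) * α^(m+l-2*u)
          * (↑(m+l+h+1) * (1+CC Ω*α)^(m+l+h+1-1) * (CC Ω*1)) ) / ((1+CC Ω*α)^(m+l+h+1))^2
      = dval Ω α h m l u := by
    have hN : m+l+h+1-1 = m+l+h := by omega
    unfold dval
    rw [hN, show (1+CC Ω*α)^(m+l+h+1) = (1+CC Ω*α)^(m+l+h)*(1+CC Ω*α) from pow_succ _ _,
      show (1+CC Ω*α)^(m+l+h+2) = (1+CC Ω*α)^(m+l+h)*(1+CC Ω*α)^2 from pow_add _ _ _]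
    have hP : (1+CC Ω*α)^(m+l+h) ≠ 0 := pow_ne_zero _ hQ
    generalize (1+CC Ω*α)^(m+l+h) = P at hP ⊢
    generalize (1:ℝ)+CC Ω*α = Q at hQ ⊢
    field_simp
  exact heq ▸ h6

include hα1 in
lemma deriv_Pmat (hQ : (1:ℝ) + CC Ω * α ≠ 0) :
    deriv (fun β => Pmat Ω h β m l) α = ∑ u ∈ Finset.range (min m l + 1),
      dval Ω α h m l u := by
  have hfun : (fun β => Pmat Ω h β m l) = (fun β => ∑ u ∈ Finset.range (min m l + 1),
      calA m l h u * (DD Ω) ^ (m+l-2*u) * (1-β) ^ (rr h u) * β ^ (m+l-2*u)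
        / (1+CC Ω*β) ^ (m+l+h+1)) := by
    funext β; exact Pmat_eq Ω h β m l
  rw [hfun]
  exact (HasDerivAt.fun_sum (fun u _ => hasDerivAt_term hα1 u hQ)).deriv


include hΩ0 hΩ1 hα0 hα1 in
set_option maxHeartbeats 1000000 in
lemma termL (u : ℕ) (hu1 : u ≤ m) (hu2 : u ≤ l) :
    α^2*(DD Ω)^2 * (-(1-α) * dval Ω α h m l u) = Lterm Ω α h m l u := by
  have h1a : (0:ℝ) < 1 - α := by linarith
  have h1ane : (1:ℝ) - α ≠ 0 := ne_of_gt h1a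
  have hQ : (0:ℝ) < 1 + CC Ω * α := hQ0 hΩ0 hΩ1 hα0
  have hQne : (1:ℝ) + CC Ω * α ≠ 0 := ne_of_gt hQ
  have hf1 : (Nat.factorial (m-u) : ℝ) ≠ 0 := Nat.cast_ne_zero.mpr (Nat.factorial_ne_zero _)
  have hf2 : (Nat.factorial (l-u) : ℝ) ≠ 0 := Nat.cast_ne_zero.mpr (Nat.factorial_ne_zero _)
  have hf3 : (Nat.factorial (h+u) : ℝ) ≠ 0 := Nat.cast_ne_zero.mpr (Nat.factorial_ne_zero _)
  have hf4 : (Nat.factorial u : ℝ) ≠ 0 := Nat.cast_ne_zero.mpr (Nat.factorial_ne_zero _)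
  have hmu : (m:ℝ)+1-(u:ℝ) ≠ 0 := by
    have : (u:ℝ) ≤ m := Nat.cast_le.mpr hu1
    linarith
  have hfac : (Nat.factorial (m+1-u) : ℝ) = ((m:ℝ)+1-(u:ℝ)) * (Nat.factorial (m-u)) := by
    rw [show m+1-u = (m-u)+1 from by omega, Nat.factorial_succ]
    push_cast [Nat.cast_sub hu1]
    ring
  have hrpow : (1-α) ^ (rr h u - 1) = (1-α) ^ (rr h u) / (1-α) :=
    Real.rpow_sub_one h1ane _
  have hcast : ((m+l-2*u : ℕ) : ℝ) = (m:ℝ)+(l:ℝ)-2*(u:ℝ) := by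
    push_cast [Nat.cast_sub (show 2*u ≤ m+l by omega)]
    ring
  unfold dval Lterm bb calA SS
  rw [hrpow, hcast, hfac]
  push_cast
  rw [show (1+CC Ω*α)^(m+l+h+2) = (1+CC Ω*α)^(m+l+h+1) * (1+CC Ω*α) from by rw [← pow_succ]]
  have hQbne : ((1:ℝ)+CC Ω*α)^(m+l+h+1) ≠ 0 := pow_ne_zero _ hQne
  generalize Real.sqrt ((Nat.factorial m : ℝ) * (Nat.factorial (m+h)) * (Nat.factorial l)
      * (Nat.factorial (l+h))) = Sq
  generalize hBB : (1:ℝ) - α = B at h1ane ⊢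
  generalize (1+CC Ω*α)^(m+l+h+1) = Qb at hQbne ⊢
  generalize (1:ℝ)+CC Ω*α = Qq at hQne ⊢
  generalize B^(rr h u) = Rq
  by_cases hz : m+l-2*u = 0
  · have hz' : (m:ℝ)+(l:ℝ)-2*(u:ℝ) = 0 := by
      have h2 : m+l = 2*u := by omega
      have h3 : (m:ℝ)+(l:ℝ) = 2*(u:ℝ) := by exact_mod_cast congrArg (Nat.cast : ℕ → ℝ) h2
      linarith
    rw [hz, hz', show m+l+1-2*u = 1 from by omega, show (0:ℕ)-1 = 0 from rfl]
    simp only [pow_zero, pow_one, one_mul, mul_one, mul_zero, zero_mul]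
    field_simp [hmu]
    ring
  · set k := m+l-2*u-1 with hk
    rw [show m+l-2*u = k+1 from by omega, show m+l+1-2*u = k+2 from by omega]
    rw [show α^(k+1) = α^k*α from pow_succ α k, show α^(k+2) = α^k*α^2 from by rw [pow_add],
      show α^(k+2+1) = α^k*α^3 from by rw [show k+2+1 = k+3 from rfl, pow_add],
      show (DD Ω)^(k+1) = (DD Ω)^k*(DD Ω) from pow_succ _ k,
      show (DD Ω)^(k+2+1) = (DD Ω)^k*(DD Ω)^3 from by rw [show k+2+1 = k+3 from rfl, pow_add]]
    generalize α^k = Ak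
    generalize (DD Ω)^k = Dk
    field_simp [hmu]
    ring


include hΩ0 hΩ1 hα0 hα1 in
set_option maxHeartbeats 1000000 in
lemma termR1 (u : ℕ) (hu1 : u ≤ m) (hu2 : u ≤ l) :
    α^2*(DD Ω)^2 * ((CC Ω+1/2) * (2*(m:ℝ)+(h:ℝ)+1)
      * (calA m l h u * (DD Ω)^(m+l-2*u) * (1-α)^(rr h u) * α^(m+l-2*u)
          / (1+CC Ω*α)^(m+l+h+1)))
      = R1term Ω α h m l u := by
  have hQne : (1:ℝ) + CC Ω * α ≠ 0 := ne_of_gt (hQ0 hΩ0 hΩ1 hα0)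
  have hf1 : (Nat.factorial (m-u) : ℝ) ≠ 0 := Nat.cast_ne_zero.mpr (Nat.factorial_ne_zero _)
  have hf2 : (Nat.factorial (l-u) : ℝ) ≠ 0 := Nat.cast_ne_zero.mpr (Nat.factorial_ne_zero _)
  have hf3 : (Nat.factorial (h+u) : ℝ) ≠ 0 := Nat.cast_ne_zero.mpr (Nat.factorial_ne_zero _)
  have hf4 : (Nat.factorial u : ℝ) ≠ 0 := Nat.cast_ne_zero.mpr (Nat.factorial_ne_zero _)
  have hmu : (m:ℝ)+1-(u:ℝ) ≠ 0 := by
    have : (u:ℝ) ≤ m := Nat.cast_le.mpr hu1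
    linarith
  have hfac : (Nat.factorial (m+1-u) : ℝ) = ((m:ℝ)+1-(u:ℝ)) * (Nat.factorial (m-u)) := by
    rw [show m+1-u = (m-u)+1 from by omega, Nat.factorial_succ]
    push_cast [Nat.cast_sub hu1]
    ring
  unfold R1term bb calA SS
  rw [hfac, show m+l+1-2*u = (m+l-2*u)+1 from by omega,
    show (1+CC Ω*α)^(m+l+h+2) = (1+CC Ω*α)^(m+l+h+1)*(1+CC Ω*α) from by rw [← pow_succ]]
  generalize Real.sqrt ((Nat.factorial m : ℝ) * (Nat.factorial (m+h)) * (Nat.factorial l)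
      * (Nat.factorial (l+h))) = Sq
  generalize hQQ : (1+CC Ω*α)^(m+l+h+1) = Qb
  have hQbne : Qb ≠ 0 := hQQ ▸ pow_ne_zero _ hQne
  generalize (1:ℝ)+CC Ω*α = Qq at hQne ⊢
  generalize (1-α)^(rr h u) = Rq
  field_simp [hmu]
  ring

include hΩ0 hΩ1 hα0 hα1 in
set_option maxHeartbeats 1000000 in
lemma termR2 (u : ℕ) (hu1 : u ≤ m+1) (hu2 : u ≤ l) :
    α^2*(DD Ω)^2 * (DD Ω * (Real.sqrt (((m:ℝ)+(h:ℝ)+1)*((m:ℝ)+1))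
      * (calA (m+1) l h u * (DD Ω)^(m+1+l-2*u) * (1-α)^(rr h u) * α^(m+1+l-2*u)
          / (1+CC Ω*α)^(m+1+l+h+1))))
      = R2term Ω α h m l u := by
  have hQne : (1:ℝ) + CC Ω * α ≠ 0 := ne_of_gt (hQ0 hΩ0 hΩ1 hα0)
  have hf1 : (Nat.factorial (m+1-u) : ℝ) ≠ 0 := Nat.cast_ne_zero.mpr (Nat.factorial_ne_zero _)
  have hf2 : (Nat.factorial (l-u) : ℝ) ≠ 0 := Nat.cast_ne_zero.mpr (Nat.factorial_ne_zero _)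
  have hf3 : (Nat.factorial (h+u) : ℝ) ≠ 0 := Nat.cast_ne_zero.mpr (Nat.factorial_ne_zero _)
  have hf4 : (Nat.factorial u : ℝ) ≠ 0 := Nat.cast_ne_zero.mpr (Nat.factorial_ne_zero _)
  have hsq1 : (0:ℝ) < Real.sqrt (((m:ℝ)+(h:ℝ)+1)*((m:ℝ)+1)) := by positivity
  have hP : SS (m+1) l h = ((m:ℝ)+1) * ((m:ℝ)+(h:ℝ)+1) * SS m l h
      / Real.sqrt (((m:ℝ)+(h:ℝ)+1)*((m:ℝ)+1)) := by
    rw [eq_div_iff (ne_of_gt hsq1)]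
    rw [← sqrtP m l h]
    ring
  unfold SS at hP
  unfold R2term bb calA SS
  rw [show m+1+l-2*u = m+l+1-2*u from by omega, show m+1+l+h+1 = m+l+h+2 from by omega, hP]
  generalize Real.sqrt ((Nat.factorial m : ℝ) * (Nat.factorial (m+h)) * (Nat.factorial l)
      * (Nat.factorial (l+h))) = Sq
  generalize hQQ : (1+CC Ω*α)^(m+l+h+2) = Qb
  have hQbne : Qb ≠ 0 := hQQ ▸ pow_ne_zero _ hQne
  generalize (1-α)^(rr h u) = Rq
  field_simp
  ring

include hΩ0 hΩ1 hα0 hα1 in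
set_option maxHeartbeats 1000000 in
lemma termR3 (u : ℕ) (hm : 1 ≤ m) (hu1 : u ≤ m-1) (hu2 : u ≤ l) :
    α^2*(DD Ω)^2 * (DD Ω * (Real.sqrt (((m:ℝ)+(h:ℝ))*(m:ℝ))
      * (calA (m-1) l h u * (DD Ω)^(m-1+l-2*u) * (1-α)^(rr h u) * α^(m-1+l-2*u)
          / (1+CC Ω*α)^(m-1+l+h+1))))
      = R3term Ω α h m l u := by
  have hQne : (1:ℝ) + CC Ω * α ≠ 0 := ne_of_gt (hQ0 hΩ0 hΩ1 hα0)
  have hf1 : (Nat.factorial (m-1-u) : ℝ) ≠ 0 := Nat.cast_ne_zero.mpr (Nat.factorial_ne_zero _)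
  have hf2 : (Nat.factorial (l-u) : ℝ) ≠ 0 := Nat.cast_ne_zero.mpr (Nat.factorial_ne_zero _)
  have hf3 : (Nat.factorial (h+u) : ℝ) ≠ 0 := Nat.cast_ne_zero.mpr (Nat.factorial_ne_zero _)
  have hf4 : (Nat.factorial u : ℝ) ≠ 0 := Nat.cast_ne_zero.mpr (Nat.factorial_ne_zero _)
  have hmu : (m:ℝ)+1-(u:ℝ) ≠ 0 := by
    have : (u:ℝ) ≤ m := Nat.cast_le.mpr (by omega)
    linarith
  have hmu2 : (m:ℝ)-(u:ℝ) ≠ 0 := by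
    have h5 : (u:ℝ) ≤ (m:ℝ)-1 := by
      have h6 : ((u:ℕ):ℝ) ≤ ((m-1:ℕ):ℝ) := Nat.cast_le.mpr hu1
      rwa [Nat.cast_sub hm, Nat.cast_one] at h6
    linarith
  have hsq2 : (0:ℝ) < Real.sqrt (((m:ℝ)+(h:ℝ))*(m:ℝ)) := by
    have : (0:ℝ) < m := by exact_mod_cast hm
    positivity
  have hM : SS (m-1) l h = SS m l h / Real.sqrt (((m:ℝ)+(h:ℝ))*(m:ℝ)) := by
    rw [eq_div_iff (ne_of_gt hsq2)]
    rw [← sqrtM m l h hm]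
    ring
  unfold SS at hM
  have hfac2 : (Nat.factorial (m+1-u) : ℝ)
      = ((m:ℝ)+1-(u:ℝ)) * (((m:ℝ)-(u:ℝ)) * (Nat.factorial (m-1-u))) := by
    rw [show m+1-u = ((m-1-u)+1)+1 from by omega, Nat.factorial_succ, Nat.factorial_succ]
    have e3 : ((m-1-u : ℕ) : ℝ) = (m:ℝ)-1-(u:ℝ) := by
      rw [Nat.cast_sub hu1, Nat.cast_sub hm, Nat.cast_one]
    push_cast [e3]
    ring
  unfold R3term bb calA SS
  rw [hfac2, hM, show m+l+1-2*u = (m-1+l-2*u)+2 from by omega,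
    show m-1+l+h+1 = m+l+h from by omega,
    show (1+CC Ω*α)^(m+l+h+2) = (1+CC Ω*α)^(m+l+h)*(1+CC Ω*α)^2 from by rw [← pow_add]]
  generalize Real.sqrt ((Nat.factorial m : ℝ) * (Nat.factorial (m+h)) * (Nat.factorial l)
      * (Nat.factorial (l+h))) = Sq
  generalize hQQ : (1+CC Ω*α)^(m+l+h) = Qb
  have hQbne : Qb ≠ 0 := hQQ ▸ pow_ne_zero _ hQne
  generalize (1:ℝ)+CC Ω*α = Qq at hQne ⊢
  generalize (1-α)^(rr h u) = Rq
  field_simp [hmu, hmu2]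
  ring

include hΩ0 hΩ1 in
set_option maxHeartbeats 1000000 in
lemma cert (u : ℕ) :
    Lterm Ω α h m l u - R1term Ω α h m l u + R2term Ω α h m l u + R3term Ω α h m l u
      = gg Ω α h m l u - gg' Ω α h m l u := by
  have hd2 := hD2 hΩ0 hΩ1
  unfold Lterm R1term R2term R3term gg gg' rr
  linear_combination (bb Ω α h m l u * (DD Ω)^(m+l+1-2*u) * DD Ω * α^(m+l+1-2*u) * α^2
    * ((((m:ℝ)+1)*((m:ℝ)+(h:ℝ)+1)) - ((h:ℝ)+(u:ℝ))*(u:ℝ))) * hd2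

include hΩ0 hΩ1 hα0 hα1 in
set_option maxHeartbeats 1000000 in
lemma stepTel (u : ℕ) (hu1 : u + 1 ≤ m+1) (hu2 : u + 1 ≤ l) :
    gg Ω α h m l (u+1) = gg' Ω α h m l u := by
  have h1a : (0:ℝ) < 1 - α := by linarith
  have h1ane : (1:ℝ) - α ≠ 0 := ne_of_gt h1a
  have hum : u ≤ m := by omega
  have hf1 : (Nat.factorial (m-u) : ℝ) ≠ 0 := Nat.cast_ne_zero.mpr (Nat.factorial_ne_zero _)
  have hf2 : (Nat.factorial (l-(u+1)) : ℝ) ≠ 0 := Nat.cast_ne_zero.mpr (Nat.factorial_ne_zero _)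
  have hf3 : (Nat.factorial (h+u) : ℝ) ≠ 0 := Nat.cast_ne_zero.mpr (Nat.factorial_ne_zero _)
  have hf4 : (Nat.factorial u : ℝ) ≠ 0 := Nat.cast_ne_zero.mpr (Nat.factorial_ne_zero _)
  have hmu : (m:ℝ)+1-(u:ℝ) ≠ 0 := by
    have : (u:ℝ) ≤ m := Nat.cast_le.mpr hum
    linarith
  have hlu : (l:ℝ)-(u:ℝ) ≠ 0 := by
    have : (u:ℝ)+1 ≤ l := by exact_mod_cast hu2
    linarith
  have hrp : (1-α)^(rr h (u+1)) = (1-α)^(rr h u) * (1-α) := by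
    rw [show rr h (u+1) = rr h u + 1 from by unfold rr; push_cast; ring,
      Real.rpow_add_one h1ane]
  have hfacm : (Nat.factorial (m+1-u) : ℝ) = ((m:ℝ)+1-(u:ℝ)) * (Nat.factorial (m-u)) := by
    rw [show m+1-u = (m-u)+1 from by omega, Nat.factorial_succ]
    push_cast [Nat.cast_sub hum]
    ring
  have hfacl : (Nat.factorial (l-u) : ℝ) = ((l:ℝ)-(u:ℝ)) * (Nat.factorial (l-(u+1))) := by
    rw [show l-u = (l-(u+1))+1 from by omega, Nat.factorial_succ]
    push_cast [Nat.cast_sub hu2]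
    ring
  have hfach : (Nat.factorial (h+(u+1)) : ℝ) = ((h:ℝ)+(u:ℝ)+1) * (Nat.factorial (h+u)) := by
    rw [show h+(u+1) = (h+u)+1 from by omega, Nat.factorial_succ]
    push_cast
    ring
  have hfacu : (Nat.factorial (u+1) : ℝ) = ((u:ℝ)+1) * (Nat.factorial u) := by
    rw [Nat.factorial_succ]
    push_cast
    ring
  have hQne : (1:ℝ) + CC Ω * α ≠ 0 := ne_of_gt (hQ0 hΩ0 hΩ1 hα0)
  unfold gg gg' bb
  rw [hrp, hfacm, hfacl, hfach, hfacu, show m+1-(u+1) = m-u from by omega,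
    show m+l+1-2*(u+1)+3 = (m+l+1-2*u)+1 from by omega,
    show m+l+1-2*(u+1)+2 = m+l+1-2*u from by omega]
  push_cast
  generalize SS m l h = Sq
  generalize hQQ : (1+CC Ω*α)^(m+l+h+2) = Qb
  have hQbne : Qb ≠ 0 := hQQ ▸ pow_ne_zero _ hQne
  generalize (1-α)^(rr h u) = Rq
  generalize hBB : (1:ℝ) - α = B at h1ane ⊢
  generalize α^(m+l+1-2*u) = Ak
  generalize (DD Ω)^(m+l+1-2*u+1) = Dk
  field_simp [hmu, hlu]
  ring

include hΩ0 hΩ1 hα0 hα1 in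
lemma sumTel :
    ∑ u ∈ Finset.range (min (m+1) l + 1), (gg Ω α h m l u - gg' Ω α h m l u) = 0 := by
  rw [Finset.sum_sub_distrib,
    Finset.sum_range_succ' (gg Ω α h m l) (min (m+1) l),
    Finset.sum_range_succ (gg' Ω α h m l) (min (m+1) l)]
  have hg0 : gg Ω α h m l 0 = 0 := by
    unfold gg
    norm_num
  have hgU : gg' Ω α h m l (min (m+1) l) = 0 := by
    rcases le_total (m+1) l with hcase | hcase
    · rw [min_eq_left hcase]
      unfold gg'
      rw [show ((m:ℝ)+1-((m+1 : ℕ):ℝ)) = 0 from by push_cast; ring]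
      ring
    · rw [min_eq_right hcase]
      unfold gg'
      rw [show ((l:ℝ)-((l : ℕ):ℝ)) = 0 from by push_cast; ring]
      ring
  rw [hg0, hgU, add_zero, add_zero, sub_eq_zero]
  refine Finset.sum_congr rfl (fun u hu => ?_)
  simp only [Finset.mem_range] at hu
  exact stepTel hΩ0 hΩ1 hα0 hα1 u (by omega) (by omega)

include hΩ0 hΩ1 hα0 hα1 in
lemma sumL :
    α^2*(DD Ω)^2 * (-(1-α) * deriv (fun β => Pmat Ω h β m l) α)
      = ∑ u ∈ Finset.range (min (m+1) l + 1), Lterm Ω α h m l u := by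
  have hQne : (1:ℝ) + CC Ω * α ≠ 0 := ne_of_gt (hQ0 hΩ0 hΩ1 hα0)
  rw [deriv_Pmat hα1 hQne, Finset.mul_sum, Finset.mul_sum]
  have e1 : ∀ u ∈ Finset.range (min m l + 1),
      α^2*(DD Ω)^2 * (-(1-α) * dval Ω α h m l u) = Lterm Ω α h m l u := by
    intro u hu
    simp only [Finset.mem_range] at hu
    exact termL hΩ0 hΩ1 hα0 hα1 u (by omega) (by omega)
  rw [Finset.sum_congr rfl e1]
  refine Finset.sum_subset (Finset.range_subset_range.mpr (by omega)) ?_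
  intro u hu hnot
  simp only [Finset.mem_range] at hu hnot
  have hu' : u = m+1 := by omega
  subst hu'
  unfold Lterm
  rw [show ((m:ℝ)+1-((m+1 : ℕ):ℝ)) = 0 from by push_cast; ring]
  ring

include hΩ0 hΩ1 hα0 hα1 in
lemma sumR1 :
    α^2*(DD Ω)^2 * ((CC Ω+1/2) * (2*(m:ℝ)+(h:ℝ)+1) * Pmat Ω h α m l)
      = ∑ u ∈ Finset.range (min (m+1) l + 1), R1term Ω α h m l u := by
  rw [Pmat_eq, Finset.mul_sum, Finset.mul_sum]
  have e1 : ∀ u ∈ Finset.range (min m l + 1),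
      α^2*(DD Ω)^2 * ((CC Ω+1/2) * (2*(m:ℝ)+(h:ℝ)+1)
        * (calA m l h u * (DD Ω)^(m+l-2*u) * (1-α)^(rr h u) * α^(m+l-2*u)
            / (1+CC Ω*α)^(m+l+h+1))) = R1term Ω α h m l u := by
    intro u hu
    simp only [Finset.mem_range] at hu
    exact termR1 hΩ0 hΩ1 hα0 hα1 u (by omega) (by omega)
  rw [Finset.sum_congr rfl e1]
  refine Finset.sum_subset (Finset.range_subset_range.mpr (by omega)) ?_
  intro u hu hnot
  simp only [Finset.mem_range] at hu hnot
  have hu' : u = m+1 := by omega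
  subst hu'
  unfold R1term
  rw [show ((m:ℝ)+1-((m+1 : ℕ):ℝ)) = 0 from by push_cast; ring]
  ring

include hΩ0 hΩ1 hα0 hα1 in
lemma sumR2 :
    α^2*(DD Ω)^2 * (DD Ω * (Real.sqrt (((m:ℝ)+(h:ℝ)+1)*((m:ℝ)+1)) * Pmat Ω h α (m+1) l))
      = ∑ u ∈ Finset.range (min (m+1) l + 1), R2term Ω α h m l u := by
  rw [Pmat_eq, Finset.mul_sum, Finset.mul_sum, Finset.mul_sum]
  refine Finset.sum_congr rfl (fun u hu => ?_)
  simp only [Finset.mem_range] at hu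
  exact termR2 hΩ0 hΩ1 hα0 hα1 u (by omega) (by omega)

include hΩ0 hΩ1 hα0 hα1 in
lemma sumR3 :
    α^2*(DD Ω)^2 * (DD Ω * (Real.sqrt (((m:ℝ)+(h:ℝ))*(m:ℝ)) * Pmat Ω h α (m-1) l))
      = ∑ u ∈ Finset.range (min (m+1) l + 1), R3term Ω α h m l u := by
  rcases Nat.eq_zero_or_pos m with hm | hm
  · subst hm
    have h0 : Real.sqrt ((((0:ℕ):ℝ)+(h:ℝ))*((0:ℕ):ℝ)) = 0 := by norm_num
    rw [h0, zero_mul, mul_zero, mul_zero]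
    symm
    apply Finset.sum_eq_zero
    intro u hu
    simp only [Finset.mem_range] at hu
    have hu' : u = 0 ∨ u = 1 := by omega
    unfold R3term
    rcases hu' with hu' | hu' <;> subst hu' <;> push_cast <;> ring
  · rw [Pmat_eq, Finset.mul_sum, Finset.mul_sum, Finset.mul_sum]
    have e1 : ∀ u ∈ Finset.range (min (m-1) l + 1),
        α^2*(DD Ω)^2 * (DD Ω * (Real.sqrt (((m:ℝ)+(h:ℝ))*(m:ℝ))
          * (calA (m-1) l h u * (DD Ω)^(m-1+l-2*u) * (1-α)^(rr h u) * α^(m-1+l-2*u)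
              / (1+CC Ω*α)^(m-1+l+h+1)))) = R3term Ω α h m l u := by
      intro u hu
      simp only [Finset.mem_range] at hu
      exact termR3 hΩ0 hΩ1 hα0 hα1 u hm (by omega) (by omega)
    rw [Finset.sum_congr rfl e1]
    refine Finset.sum_subset (Finset.range_subset_range.mpr (by omega)) ?_
    intro u hu hnot
    simp only [Finset.mem_range] at hu hnot
    have hu' : u = m ∨ u = m+1 := by omega
    unfold R3term
    rcases hu' with hu' | hu'
    · rw [hu', show ((m:ℝ)-((m : ℕ):ℝ)) = 0 from sub_self _]
      ring
    · rw [hu', show ((m:ℝ)+1-((m+1 : ℕ):ℝ)) = 0 from by push_cast; ring]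
      ring

end

end PmatODE

theorem Pmat_satisfies_ODE (θ Ω : ℝ) (hθ : 0 < θ) (hΩ0 : 0 < Ω) (hΩ1 : Ω < 1)
    (h : ℕ) (α : ℝ) (hα0 : 0 < α) (hα1 : α < 1) (m l : ℕ) :
    -(1-α) * deriv (fun β => Pmat Ω h β m l) α
      = ((1+Ω^2)/(4*Ω)) * (2*(m:ℝ)+(h:ℝ)+1) * Pmat Ω h α m l
        - ((1-Ω^2)/(4*Ω)) *
          (Real.sqrt (((m:ℝ)+(h:ℝ)+1)*((m:ℝ)+1)) * Pmat Ω h α (m+1) l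
            + Real.sqrt (((m:ℝ)+(h:ℝ))*(m:ℝ)) * Pmat Ω h α (m-1) l) := by
  open PmatODE in
  have hD := hD0 hΩ0 hΩ1
  have hμ : α^2*(DD Ω)^2 ≠ 0 :=
    mul_ne_zero (pow_ne_zero _ (ne_of_gt hα0)) (pow_ne_zero _ (ne_of_gt hD))
  apply mul_left_cancel₀ hμ
  rw [hc1 hΩ0, hc2 hΩ0 hΩ1]
  have H1 := sumL hΩ0 hΩ1 hα0 hα1 (h := h) (m := m) (l := l)
  have H2 := sumR1 hΩ0 hΩ1 hα0 hα1 (h := h) (m := m) (l := l)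
  have H3 := sumR2 hΩ0 hΩ1 hα0 hα1 (h := h) (m := m) (l := l)
  have H4 := sumR3 hΩ0 hΩ1 hα0 hα1 (h := h) (m := m) (l := l)
  have H5 : ∑ u ∈ Finset.range (min (m+1) l + 1),
      (Lterm Ω α h m l u - R1term Ω α h m l u + R2term Ω α h m l u + R3term Ω α h m l u)
      = ∑ u ∈ Finset.range (min (m+1) l + 1), (gg Ω α h m l u - gg' Ω α h m l u) :=
    Finset.sum_congr rfl (fun u _ => cert hΩ0 hΩ1 u)
  have H6 := sumTel hΩ0 hΩ1 hα0 hα1 (h := h) (m := m) (l := l)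
  have H7 : (∑ u ∈ Finset.range (min (m+1) l + 1), Lterm Ω α h m l u)
      - (∑ u ∈ Finset.range (min (m+1) l + 1), R1term Ω α h m l u)
      + (∑ u ∈ Finset.range (min (m+1) l + 1), R2term Ω α h m l u)
      + (∑ u ∈ Finset.range (min (m+1) l + 1), R3term Ω α h m l u) = 0 := by
    simp only [Finset.sum_add_distrib, Finset.sum_sub_distrib] at H5 H6 ⊢
    rw [H5, H6]
  linear_combination H1 - H2 + H3 + H4 + H7
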